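/- For integers a, b, k with k ≥ b > a ≥ 1 and m ≥ 1: Σ_{λ ∈ BR'_{a,b,k}(m)} u^{ℓ_a(λ)} v^{ℓ_b(λ)} q^{|λ|} = Σ_{h=0}^{m} u^{h} v^{m−h} q^{mb + k·C(h,2) + (a−b)h} [m choose h]_k. -/

import Mathlib

/-- The finite q-Pochhammer symbol `(t;q)_n = ∏_{i=0}^{n-1} (1 - t qⁱ)`. -/
noncomputable def qPoch (t q : ℂ) (n : ℕ) : ℂ := ∏ i ∈ Finset.range n, (1 - t * q ^ i)

/-- The infinite q-Pochhammer symbol `(t;q)_∞ = ∏_{i≥0} (1 - t qⁱ)`. -/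
noncomputable def qPochInf (t q : ℂ) : ℂ := ∏' i : ℕ, (1 - t * q ^ i)

/-- The Gaussian binomial coefficient `[A choose B]` in base `q`:
`(q;q)_A / ((q;q)_B (q;q)_{A-B})` for `A ≥ B ≥ 0`, and `0` otherwise. -/
noncomputable def gbinom (q : ℂ) (A B : ℕ) : ℂ :=
  if B ≤ A then qPoch q q A / (qPoch q q B * qPoch q q (A - B)) else 0

/-- `lcount k c l` is the number of parts of `l` congruent to `c` modulo `k`. -/
def lcount (k c : ℕ) (l : List ℕ) : ℕ := (l.filter (fun x => x % k = c % k)).length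

/-- Membership in `BR'_{a,b,k}(m)`: partitions `(λ_1,…,λ_m)` with exactly `m` parts, each
`≡ a` or `b (mod k)`, only parts `≡ b (mod k)` possibly repeated, `λ_m ∈ {a, b}`, and for
consecutive parts `λ_i - λ_{i+1} ≤ k` with strict inequality if `λ_{i+1} ≡ b (mod k)`. -/
def memBR' (a b k m : ℕ) (l : List ℕ) : Prop :=
  l.Pairwise (· ≥ ·) ∧ l.length = m ∧
    (∀ x ∈ l, 0 < x ∧ (x % k = a % k ∨ x % k = b % k)) ∧
    (∀ x : ℕ, x % k = a % k → l.count x ≤ 1) ∧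
    (l.getLast? = some a ∨ l.getLast? = some b) ∧
    l.Chain' (fun x y => x ≤ y + k ∧ (y % k = b % k → x < y + k))


/-- value of a letter: `true ↦ a`, `false ↦ b` -/
def bval (a b : ℕ) (c : Bool) : ℕ := cond c a b

/-- number of `true`s excluding the last position -/
def tcBR (l : List Bool) : ℕ := l.dropLast.count true

/-- the partition associated to a word -/
def bp (a b k : ℕ) : List Bool → List ℕ
  | [] => []
  | c :: s => (bval a b c + k * tcBR (c :: s)) :: bp a b k s

/-- left-recursive weight -/
def wtBR : List Bool → ℕ
  | [] => 0
  | c :: s => tcBR (c :: s) + wtBR s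

/-- weight in "dropLast" form -/
def wtBR' : List Bool → ℕ
  | [] => 0
  | c :: s => c.toNat + s.count true + wtBR' s

lemma tcBR_cons {s : List Bool} (c : Bool) (hs : s ≠ []) :
    tcBR (c :: s) = c.toNat + tcBR s := by
  unfold tcBR
  rw [List.dropLast_cons_of_ne_nil hs, List.count_cons]
  cases c <;> simp [Bool.toNat] <;> omega

lemma tcBR_single (c : Bool) : tcBR [c] = 0 := by simp [tcBR]

lemma bp_length (a b k : ℕ) (w : List Bool) : (bp a b k w).length = w.length := by
  induction w with
  | nil => rfl
  | cons c s ih => simp [bp, ih]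

lemma bp_sum (a b k : ℕ) (w : List Bool) :
    (bp a b k w).sum = a * w.count true + b * w.count false + k * wtBR w := by
  induction w with
  | nil => simp [bp, wtBR]
  | cons c s ih =>
    rw [bp, List.sum_cons, ih, wtBR]
    cases c <;> simp [bval, List.count_cons] <;> ring

lemma wtBR_concat (s : List Bool) (c : Bool) : wtBR (s ++ [c]) = wtBR' s := by
  induction s with
  | nil => simp [wtBR, wtBR', tcBR_single]
  | cons d s ih =>
    rw [List.cons_append, wtBR, ih, wtBR']
    congr 1
    have : (d :: s) ++ [c] = d :: (s ++ [c]) := rfl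
    rw [← this]
    unfold tcBR
    rw [List.dropLast_concat, List.count_cons]
    cases d <;> simp [Bool.toNat] <;> omega

/-- the finset of words of length `n` -/
def Wrd (n : ℕ) : Finset (List Bool) :=
  (Finset.univ : Finset (Fin n → Bool)).image List.ofFn

lemma mem_Wrd {n : ℕ} {w : List Bool} : w ∈ Wrd n ↔ w.length = n := by
  constructor
  · intro h
    simp only [Wrd, Finset.mem_image] at h
    obtain ⟨f, _, rfl⟩ := h
    simp
  · intro h
    subst h
    simp only [Wrd, Finset.mem_image]
    exact ⟨w.get, Finset.mem_univ _, List.ofFn_get w⟩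

lemma Wrd_zero : Wrd 0 = {[]} := by
  ext w; simp [mem_Wrd, List.length_eq_zero_iff]

lemma Wrd_succ_cons (n : ℕ) :
    Wrd (n + 1) = ((Finset.univ : Finset Bool) ×ˢ Wrd n).image (fun p => p.1 :: p.2) := by
  ext w
  simp only [mem_Wrd, Finset.mem_image, Finset.mem_product, Finset.mem_univ, true_and]
  constructor
  · intro h
    match w with
    | c :: s => exact ⟨(c, s), by simpa using Nat.succ_injective h, rfl⟩
  · rintro ⟨⟨c, s⟩, hs, rfl⟩
    simp only at hs
    simp [hs]

lemma Wrd_succ_concat (n : ℕ) :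
    Wrd (n + 1) = (Wrd n ×ˢ (Finset.univ : Finset Bool)).image (fun p => p.1 ++ [p.2]) := by
  ext w
  simp only [mem_Wrd, Finset.mem_image, Finset.mem_product, Finset.mem_univ, and_true]
  constructor
  · intro h
    have hw : w ≠ [] := by intro hh; subst hh; simp at h
    refine ⟨(w.dropLast, w.getLast hw), ?_, List.dropLast_append_getLast hw⟩
    simp [mem_Wrd]
    omega
  · rintro ⟨⟨s, c⟩, hs, rfl⟩
    simp only [mem_Wrd] at hs
    simp [hs]

lemma sum_Wrd_cons (n : ℕ) (f : List Bool → ℂ) :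
    ∑ w ∈ Wrd (n + 1), f w = ∑ s ∈ Wrd n, (f (true :: s) + f (false :: s)) := by
  rw [Wrd_succ_cons, Finset.sum_image]
  · rw [Finset.sum_product, Fintype.sum_bool, ← Finset.sum_add_distrib]
  · rintro ⟨c, s⟩ _ ⟨c', s'⟩ _ h
    simpa using h

lemma sum_Wrd_concat (n : ℕ) (f : List Bool → ℂ) :
    ∑ w ∈ Wrd (n + 1), f w = ∑ s ∈ Wrd n, (f (s ++ [true]) + f (s ++ [false])) := by
  rw [Wrd_succ_concat, Finset.sum_image]
  · rw [Finset.sum_product]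
    congr 1
    ext s
    simp
  · rintro ⟨s, c⟩ hs ⟨s', c'⟩ hs' h
    simp only [Finset.mem_coe, Finset.mem_product, mem_Wrd, Finset.mem_univ, and_true] at hs hs'
    simp only at h
    obtain ⟨h1, h2⟩ := List.append_inj h (by omega)
    simp only [List.cons.injEq, and_true] at h2
    exact Prod.ext h1 h2

section Props

variable {a b k : ℕ} (ha : 1 ≤ a) (hab : a < b) (hbk : b ≤ k)

lemma hak (ha : 1 ≤ a) (hab : a < b) (hbk : b ≤ k) : a % k = a :=
  Nat.mod_eq_of_lt (by omega)

lemma hrab (ha : 1 ≤ a) (hab : a < b) (hbk : b ≤ k) : a % k ≠ b % k := by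
  rcases eq_or_lt_of_le hbk with rfl | hlt
  · rw [hak ha hab le_rfl, Nat.mod_self]; omega
  · rw [hak ha hab hbk, Nat.mod_eq_of_lt hlt]; omega

lemma bres (a b k : ℕ) (c : Bool) (t : ℕ) :
    (bval a b c + k * t) % k = bval a b c % k := Nat.add_mul_mod_self_left _ _ _

lemma bres_a (ha : 1 ≤ a) (hab : a < b) (hbk : b ≤ k) (c : Bool) (t : ℕ) :
    ((bval a b c + k * t) % k = a % k) ↔ c = true := by
  rw [bres]
  cases c
  · simpa [bval] using (hrab ha hab hbk).symm
  · simp [bval]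

lemma bres_b (ha : 1 ≤ a) (hab : a < b) (hbk : b ≤ k) (c : Bool) (t : ℕ) :
    ((bval a b c + k * t) % k = b % k) ↔ c = false := by
  rw [bres]
  cases c
  · simp [bval]
  · simpa [bval] using hrab ha hab hbk

lemma bp_cons (a b k : ℕ) (c : Bool) (s : List Bool) :
    bp a b k (c :: s) = (bval a b c + k * tcBR (c :: s)) :: bp a b k s := rfl

lemma bp_ne_nil (a b k : ℕ) {w : List Bool} (hw : w ≠ []) : bp a b k w ≠ [] := by
  cases w with
  | nil => exact absurd rfl hw
  | cons c s => simp [bp_cons]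

lemma bp_pos_res (ha : 1 ≤ a) (hab : a < b) (hbk : b ≤ k) (w : List Bool) :
    ∀ x ∈ bp a b k w, 0 < x ∧ (x % k = a % k ∨ x % k = b % k) := by
  induction w with
  | nil => simp [bp]
  | cons c s ih =>
    rw [bp_cons]
    intro x hx
    rcases List.mem_cons.mp hx with rfl | hx
    · constructor
      · cases c <;> simp [bval] <;> omega
      · rw [bres]
        cases c
        · right; rfl
        · left; rfl
    · exact ih x hx

lemma bp_chainR (ha : 1 ≤ a) (hab : a < b) (hbk : b ≤ k) (w : List Bool) :
    (bp a b k w).Chain' (fun x y => y ≤ x ∧ (x % k = a % k → y < x)) := by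
  induction w with
  | nil => simp [bp, List.Chain']
  | cons c s ih =>
    cases s with
    | nil => simp [bp_cons, bp, List.Chain']
    | cons c' s' =>
      rw [bp_cons, bp_cons a b k c', List.Chain', List.isChain_cons_cons]
      rw [bp_cons a b k c'] at ih
      refine ⟨?_, ih⟩
      rw [tcBR_cons c (by simp)]
      set t := tcBR (c' :: s') with ht
      constructor
      · cases c <;> cases c' <;> simp [bval, Bool.toNat, Nat.mul_add] <;> omega
      · rw [bres_a ha hab hbk]
        intro hc; subst hc
        cases c' <;> simp [bval, Bool.toNat, Nat.mul_add] <;> omega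

lemma bp_chain2 (ha : 1 ≤ a) (hab : a < b) (hbk : b ≤ k) (w : List Bool) :
    (bp a b k w).Chain' (fun x y => x ≤ y + k ∧ (y % k = b % k → x < y + k)) := by
  induction w with
  | nil => simp [bp, List.Chain']
  | cons c s ih =>
    cases s with
    | nil => simp [bp_cons, bp, List.Chain']
    | cons c' s' =>
      rw [bp_cons, bp_cons a b k c', List.Chain', List.isChain_cons_cons]
      rw [bp_cons a b k c'] at ih
      refine ⟨?_, ih⟩
      rw [tcBR_cons c (by simp)]
      set t := tcBR (c' :: s') with ht
      constructor
      · cases c <;> cases c' <;> simp [bval, Bool.toNat, Nat.mul_add] <;> omega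
      · rw [bres_b ha hab hbk]
        intro hc; subst hc
        cases c <;> simp [bval, Bool.toNat, Nat.mul_add] <;> omega

lemma bp_getLast (ha : 1 ≤ a) (hab : a < b) (hbk : b ≤ k) :
    ∀ w : List Bool, w ≠ [] →
      ((bp a b k w).getLast? = some a ∨ (bp a b k w).getLast? = some b) := by
  intro w
  induction w with
  | nil => intro h; exact absurd rfl h
  | cons c s ih =>
    intro _
    cases s with
    | nil =>
      cases c
      · right; simp [bp_cons, bp, tcBR_single, bval]
      · left; simp [bp_cons, bp, tcBR_single, bval]
    | cons c' s' =>
      rw [bp_cons, bp_cons a b k c', List.getLast?_cons_cons]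
      rw [bp_cons a b k c'] at ih
      exact ih (by simp)

end Props

section Props2

lemma lcount_cons (k r x : ℕ) (l : List ℕ) :
    lcount k r (x :: l) = (if x % k = r % k then 1 else 0) + lcount k r l := by
  simp only [lcount, List.filter_cons]
  split <;> simp_all <;> omega

lemma lcount_bp_a {a b k : ℕ} (ha : 1 ≤ a) (hab : a < b) (hbk : b ≤ k) (w : List Bool) :
    lcount k a (bp a b k w) = w.count true := by
  induction w with
  | nil => simp [bp, lcount]
  | cons c s ih =>
    rw [bp_cons, lcount_cons, ih, List.count_cons]
    cases c
    · rw [if_neg (by simpa using (bres_a ha hab hbk false (tcBR (false :: s))).not.mpr (by simp))]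
      simp
    · rw [if_pos ((bres_a ha hab hbk true (tcBR (true :: s))).mpr rfl)]
      simp [Nat.add_comm]

lemma lcount_bp_b {a b k : ℕ} (ha : 1 ≤ a) (hab : a < b) (hbk : b ≤ k) (w : List Bool) :
    lcount k b (bp a b k w) = w.count false := by
  induction w with
  | nil => simp [bp, lcount]
  | cons c s ih =>
    rw [bp_cons, lcount_cons, ih, List.count_cons]
    cases c
    · rw [if_pos ((bres_b ha hab hbk false (tcBR (false :: s))).mpr rfl)]
      simp [Nat.add_comm]
    · rw [if_neg (by simpa using (bres_b ha hab hbk true (tcBR (true :: s))).not.mpr (by simp))]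
      simp

lemma bp_pairwiseR {a b k : ℕ} (ha : 1 ≤ a) (hab : a < b) (hbk : b ≤ k) (w : List Bool) :
    (bp a b k w).Pairwise (fun x y => y ≤ x ∧ (x % k = a % k → y < x)) := by
  haveI : IsTrans ℕ (fun x y => y ≤ x ∧ (x % k = a % k → y < x)) := by
    constructor
    rintro x y z ⟨h1, h2⟩ ⟨h3, h4⟩
    exact ⟨h3.trans h1, fun h => lt_of_le_of_lt h3 (h2 h)⟩
  exact List.isChain_iff_pairwise.mp (bp_chainR ha hab hbk w)

lemma bp_memBR' {a b k : ℕ} (ha : 1 ≤ a) (hab : a < b) (hbk : b ≤ k)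
    {w : List Bool} (hw : w ≠ []) : memBR' a b k w.length (bp a b k w) := by
  have hpw := bp_pairwiseR ha hab hbk w
  refine ⟨?_, bp_length a b k w, bp_pos_res ha hab hbk w, ?_, bp_getLast ha hab hbk w hw,
    bp_chain2 ha hab hbk w⟩
  · exact hpw.imp (fun h => h.1)
  · intro x hx
    by_contra hc
    have h2 : 2 ≤ (bp a b k w).count x := by omega
    have hdup : [x, x].Sublist (bp a b k w) :=
      List.duplicate_iff_sublist.mp (List.duplicate_iff_two_le_count.mpr h2)
    have := (List.pairwise_cons.mp (hpw.sublist hdup)).1 x (by simp)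
    exact absurd (this.2 hx) (lt_irrefl x)

lemma bp_inj {a b k : ℕ} (ha : 1 ≤ a) (hab : a < b) (hbk : b ≤ k) :
    ∀ w w' : List Bool, bp a b k w = bp a b k w' → w = w' := by
  intro w
  induction w with
  | nil =>
    intro w' h
    cases w' with
    | nil => rfl
    | cons c s => simp [bp, bp_cons] at h
  | cons c s ih =>
    intro w' h
    cases w' with
    | nil => simp [bp, bp_cons] at h
    | cons c' s' =>
      rw [bp_cons, bp_cons, List.cons.injEq] at h
      obtain ⟨h1, h2⟩ := h
      have hss : s = s' := ih s' h2
      subst hss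
      have : (bval a b c + k * tcBR (c :: s)) % k = (bval a b c' + k * tcBR (c' :: s)) % k := by
        rw [h1]
      rw [bres, bres] at this
      cases c <;> cases c' <;> simp [bval] at this ⊢
      · exact absurd this.symm (hrab ha hab hbk)
      · exact absurd this (hrab ha hab hbk)

end Props2

lemma bp_surj {a b k : ℕ} (ha : 1 ≤ a) (hab : a < b) (hbk : b ≤ k) :
    ∀ l : List ℕ, l ≠ [] →
      l.Pairwise (· ≥ ·) →
      (∀ x ∈ l, 0 < x ∧ (x % k = a % k ∨ x % k = b % k)) →
      (∀ x : ℕ, x % k = a % k → l.count x ≤ 1) →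
      (l.getLast? = some a ∨ l.getLast? = some b) →
      l.Chain' (fun x y => x ≤ y + k ∧ (y % k = b % k → x < y + k)) →
      ∃ w : List Bool, w.length = l.length ∧ bp a b k w = l := by
  have hk : 0 < k := by omega
  intro l
  induction l with
  | nil => intro h; exact absurd rfl h
  | cons x l ih =>
    intro _ hsort hres hcount hlast hchain
    cases l with
    | nil =>
      simp only [List.getLast?_singleton, Option.some.injEq] at hlast
      rcases hlast with rfl | rfl
      · exact ⟨[true], rfl, by simp [bp_cons, bp, tcBR_single, bval]⟩
      · exact ⟨[false], rfl, by simp [bp_cons, bp, tcBR_single, bval]⟩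
    | cons y rest =>
      obtain ⟨w', hw'len, hw'⟩ := ih (by simp)
        ((List.pairwise_cons.mp hsort).2)
        (fun z hz => hres z (List.mem_cons_of_mem x hz))
        (fun z hz => le_trans ((List.sublist_cons_self x (y :: rest)).count_le z) (hcount z hz))
        (by rwa [List.getLast?_cons_cons] at hlast)
        hchain.tail
      cases w' with
      | nil => simp [bp] at hw'
      | cons c' s' =>
        rw [bp_cons, List.cons.injEq] at hw'
        obtain ⟨hy, hrest⟩ := hw'
        set t := tcBR (c' :: s') with hts
        -- basic facts about x
        have hxy : y ≤ x := (List.pairwise_cons.mp hsort).1 y (by simp)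
        have hch := (List.isChain_cons_cons.mp hchain).1
        have hxyk : x ≤ y + k := hch.1
        have hx0 : 0 < x := (hres x (by simp)).1
        have hxr := (hres x (by simp)).2
        have hmul1 : k * (t + 1) = k * t + k := by ring
        have hmul2 : k * (t + 2) = k * t + k + k := by ring
        rcases hxr with hxa | hxb
        · -- x ≡ a, show x = a + k*(t+1)
          have hxmod : x % k = a := by rw [hxa, hak ha hab hbk]
          have hdec : x = a + k * (x / k) := by
            have := Nat.div_add_mod x k
            omega
          set s := x / k with hsd
          have hxny : x ≠ y := by
            intro h
            have := hcount x hxa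
            subst h
            simp [List.count_cons_self] at this
          have hst : s = t + 1 := by
            cases c'
            · -- y = b + k*t
              have hyv : y = b + k * t := by rw [← hy]; rfl
              have hybk : y % k = b % k := by rw [← hy]; exact bres a b k false t
              have hstrict : x < y + k := hch.2 hybk
              have h1 : k * t < k * s := by omega
              have h2 : k * s < k * (t + 2) := by omega
              have := Nat.lt_of_mul_lt_mul_left h2
              have := Nat.lt_of_mul_lt_mul_left h1
              omega
            · -- y = a + k*t
              have hyv : y = a + k * t := by rw [← hy]; rfl
              have h1 : k * t ≤ k * s := by omega
              have h2 : k * s ≤ k * (t + 1) := by omega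
              have := Nat.le_of_mul_le_mul_left h2 hk
              have := Nat.le_of_mul_le_mul_left h1 hk
              have hsnt : s ≠ t := by
                intro h
                exact hxny (by rw [hdec, hyv, h])
              omega
          refine ⟨true :: c' :: s', by simpa using hw'len, ?_⟩
          rw [bp_cons, tcBR_cons true (by simp), bp_cons, hrest, List.cons.injEq]
          refine ⟨?_, by rw [← hy]⟩
          rw [hdec, hst, hts]
          simp only [bval, cond_true, Bool.toNat_true]
          ring
        · -- x ≡ b, show x = b + k*t
          have hbx : b ≤ x := by
            rcases eq_or_lt_of_le hbk with rfl | hlt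
            · have : x % b = 0 := by rwa [Nat.mod_self] at hxb
              have := Nat.le_of_dvd hx0 (Nat.dvd_of_mod_eq_zero this)
              omega
            · have : x % k = b := by rwa [Nat.mod_eq_of_lt hlt] at hxb
              have := Nat.mod_le x k
              omega
          have hdvd : k ∣ (x - b) := (Nat.modEq_iff_dvd' hbx).mp hxb.symm
          obtain ⟨s, hsdef⟩ := hdvd
          have hdec : x = b + k * s := by omega
          have hst : s = t := by
            cases c'
            · -- y = b + k*t
              have hyv : y = b + k * t := by rw [← hy]; rfl
              have hybk : y % k = b % k := by rw [← hy]; exact bres a b k false t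
              have hstrict : x < y + k := hch.2 hybk
              have h1 : k * t ≤ k * s := by omega
              have h2 : k * s < k * (t + 1) := by omega
              have := Nat.lt_of_mul_lt_mul_left h2
              have := Nat.le_of_mul_le_mul_left h1 hk
              omega
            · -- y = a + k*t
              have hyv : y = a + k * t := by rw [← hy]; rfl
              have e4 : k * (s + 1) = k * s + k := by ring
              have h1 : k * t < k * (s + 1) := by omega
              have h2 : k * s < k * (t + 1) := by omega
              have := Nat.lt_of_mul_lt_mul_left h2
              have := Nat.lt_of_mul_lt_mul_left h1
              omega
          refine ⟨false :: c' :: s', by simpa using hw'len, ?_⟩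
          rw [bp_cons, tcBR_cons false (by simp), bp_cons, hrest, List.cons.injEq]
          refine ⟨?_, by rw [← hy]⟩
          rw [hdec, hst, hts]
          simp only [bval, cond_false, Bool.toNat_false]
          ring

lemma qPoch_zero (t q : ℂ) : qPoch t q 0 = 1 := by simp [qPoch]

lemma qPoch_succ' (q : ℂ) (n : ℕ) :
    qPoch q q (n + 1) = qPoch q q n * (1 - q ^ (n + 1)) := by
  rw [qPoch, Finset.prod_range_succ, ← qPoch, ← pow_succ']

lemma one_sub_pow_ne_zero {q : ℂ} (hq : ‖q‖ < 1) {j : ℕ} (hj : j ≠ 0) :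
    (1 : ℂ) - q ^ j ≠ 0 := by
  intro h
  have h2 : q ^ j = 1 := by linear_combination -h
  have h1 : ‖q ^ j‖ < 1 := by
    rw [norm_pow]
    exact pow_lt_one₀ (norm_nonneg q) hq hj
  rw [h2] at h1; simp at h1

lemma qPoch_ne_zero {q : ℂ} (hq : ‖q‖ < 1) (n : ℕ) : qPoch q q n ≠ 0 := by
  induction n with
  | zero => simp [qPoch_zero]
  | succ n ih =>
    rw [qPoch_succ']
    exact mul_ne_zero ih (one_sub_pow_ne_zero hq (Nat.succ_ne_zero n))

lemma gbinom_zero_right {q : ℂ} (hq : ‖q‖ < 1) (n : ℕ) : gbinom q n 0 = 1 := by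
  simp [gbinom, qPoch_zero]
  exact qPoch_ne_zero hq _

lemma gbinom_eq_zero {q : ℂ} {n h : ℕ} (hh : n < h) : gbinom q n h = 0 := by
  simp [gbinom, Nat.not_le.mpr hh]

lemma gbinom_self {q : ℂ} (hq : ‖q‖ < 1) (n : ℕ) : gbinom q n n = 1 := by
  simp [gbinom, qPoch_zero]
  exact qPoch_ne_zero hq _

lemma gbinom_pascal {q : ℂ} (hq : ‖q‖ < 1) (n h : ℕ) :
    gbinom q (n + 1) (h + 1) = q ^ (h + 1) * gbinom q n (h + 1) + gbinom q n h := by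
  rcases lt_trichotomy n h with hl | rfl | hl
  · rw [gbinom_eq_zero (by omega), gbinom_eq_zero (by omega), gbinom_eq_zero (by omega)]
    ring
  · rw [gbinom_self hq, gbinom_eq_zero (by omega), gbinom_self hq]
    ring
  · have h1 : h + 1 ≤ n := hl
    rw [gbinom, gbinom, gbinom, if_pos (by omega), if_pos (by omega), if_pos (by omega)]
    have e1 : n + 1 - (h + 1) = n - h := by omega
    rw [e1, qPoch_succ' q n]
    have f2 : (1 : ℂ) - q ^ (n - h) ≠ 0 := one_sub_pow_ne_zero hq (by omega)
    have f3 : (1 : ℂ) - q ^ (h + 1) ≠ 0 := one_sub_pow_ne_zero hq (by omega)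
    have pn := qPoch_ne_zero hq n
    have ph := qPoch_ne_zero hq h
    have ph1 := qPoch_ne_zero hq (h + 1)
    have pnh := qPoch_ne_zero hq (n - h)
    have pnh1 := qPoch_ne_zero hq (n - (h + 1))
    have split : (1 : ℂ) - q ^ (n + 1) = q ^ (h + 1) * (1 - q ^ (n - h)) + (1 - q ^ (h + 1)) := by
      have e : q ^ (n + 1) = q ^ (h + 1) * q ^ (n - h) := by
        rw [← pow_add]; congr 1; omega
      linear_combination -e
    have epo : qPoch q q (n - h) = qPoch q q (n - (h + 1)) * (1 - q ^ (n - h)) := by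
      have e2 : n - h = (n - (h + 1)) + 1 := by omega
      rw [e2, qPoch_succ', ← e2]
    have t1 : qPoch q q n * (q ^ (h + 1) * (1 - q ^ (n - h))) /
        (qPoch q q (h + 1) * qPoch q q (n - h)) =
        q ^ (h + 1) * (qPoch q q n / (qPoch q q (h + 1) * qPoch q q (n - (h + 1)))) := by
      rw [epo]
      field_simp
    have t2 : qPoch q q n * (1 - q ^ (h + 1)) / (qPoch q q (h + 1) * qPoch q q (n - h)) =
        qPoch q q n / (qPoch q q h * qPoch q q (n - h)) := by
      rw [qPoch_succ' q h]
      field_simp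
    rw [split, mul_add, add_div, t1, t2]

lemma choose2_succ (h : ℕ) : Nat.choose (h + 2) 2 = Nat.choose (h + 1) 2 + (h + 1) := by
  have e : (h + 2).choose 2 = (h + 1).choose 1 + (h + 1).choose 2 :=
    Nat.choose_succ_succ (h + 1) 1
  rw [Nat.choose_one_right] at e
  omega

lemma main_sum (x : ℂ) (hx : ‖x‖ < 1) :
    ∀ (n : ℕ) (φ : ℕ → ℂ), (∑ s ∈ Wrd n, φ (s.count true) * x ^ wtBR' s)
      = ∑ h ∈ Finset.range (n + 1), φ h * (x ^ Nat.choose (h + 1) 2 * gbinom x n h) := by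
  intro n
  induction n with
  | zero =>
    intro φ
    rw [Wrd_zero]
    simp [wtBR', gbinom_zero_right hx]
  | succ n ih =>
    intro φ
    rw [sum_Wrd_cons]
    have step : ∀ s ∈ Wrd n,
        (φ ((true :: s).count true) * x ^ wtBR' (true :: s)
          + φ ((false :: s).count true) * x ^ wtBR' (false :: s))
        = (fun h => φ (h + 1) * x ^ (h + 1) + φ h * x ^ h) (s.count true) * x ^ wtBR' s := by
      intro s _
      rw [show wtBR' (true :: s) = 1 + s.count true + wtBR' s from rfl,
          show wtBR' (false :: s) = 0 + s.count true + wtBR' s from rfl]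
      simp only [List.count_cons, if_pos, if_neg, pow_add]
      norm_num
      ring
    rw [Finset.sum_congr rfl step, ih (fun h => φ (h + 1) * x ^ (h + 1) + φ h * x ^ h)]
    have e1 : ∀ h, (φ (h + 1) * x ^ (h + 1) + φ h * x ^ h) * (x ^ Nat.choose (h + 1) 2 * gbinom x n h)
        = φ (h + 1) * x ^ (Nat.choose (h + 1) 2 + (h + 1)) * gbinom x n h
          + φ h * x ^ (Nat.choose (h + 1) 2 + h) * gbinom x n h := by
      intro h
      rw [pow_add, pow_add]
      ring
    rw [Finset.sum_congr rfl (fun h _ => e1 h), Finset.sum_add_distrib]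
    set B : ℕ → ℂ := fun h => φ h * x ^ (Nat.choose (h + 1) 2 + h) * gbinom x n h with hB
    have hBtop : B (n + 1) = 0 := by
      rw [hB]; simp [gbinom_eq_zero (Nat.lt_succ_self n)]
    have hsumB : ∑ h ∈ Finset.range (n + 1), B h = ∑ h ∈ Finset.range (n + 1), B (h + 1) + B 0 := by
      have h1 := Finset.sum_range_succ' B (n + 1)
      have h2 : ∑ h ∈ Finset.range (n + 1 + 1), B h = ∑ h ∈ Finset.range (n + 1), B h := by
        rw [Finset.sum_range_succ, hBtop, add_zero]
      rw [← h2, h1]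
    rw [hsumB]
    conv_rhs => rw [Finset.sum_range_succ']
    rw [← add_assoc, ← Finset.sum_add_distrib]
    congr 1
    · apply Finset.sum_congr rfl
      intro h _
      rw [hB]
      simp only
      rw [gbinom_pascal hx n h, choose2_succ h, pow_add, pow_add, pow_add]
      ring
    · rw [hB]
      simp [gbinom_zero_right hx]

lemma count_tf (s : List Bool) : s.count true + s.count false = s.length := by
  induction s with
  | nil => rfl
  | cons c t ih => cases c <;> simp [List.count_cons] <;> omega

lemma qmerge (q : ℂ) (k i j : ℕ) : q ^ i * (q ^ k) ^ j = q ^ (i + k * j) := by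
  rw [← pow_mul, ← pow_add]

/-- Generating function for the partitions in `BR'_{a,b,k}(m)`:
`Σ_{λ ∈ BR'_{a,b,k}(m)} u^{ℓ_a} v^{ℓ_b} q^{|λ|}
  = Σ_{h=0}^{m} u^h v^{m-h} q^{mb + k C(h,2) + (a-b)h} [m, h]_k`,
where the exponent `mb + (a-b)h` is written as `(m-h)b + ha ≥ 0`. -/
theorem gen_BR'_m (a b k m : ℕ) (ha : 1 ≤ a) (hab : a < b) (hbk : b ≤ k)
    (hm : 1 ≤ m) (q u v : ℂ) (hq : ‖q‖ < 1) :
    ∑ᶠ l ∈ {l : List ℕ | memBR' a b k m l},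
        u ^ lcount k a l * v ^ lcount k b l * q ^ l.sum
      = ∑ h ∈ Finset.range (m + 1), u ^ h * v ^ (m - h) *
          q ^ ((m - h) * b + a * h + k * Nat.choose h 2) * gbinom (q ^ k) m h := by
  have hx : ‖q ^ k‖ < 1 := by
    rw [norm_pow]
    exact pow_lt_one₀ (norm_nonneg q) hq (by omega)
  -- step 1 : the set of partitions is the image of `bp` on words of length m
  have hset : {l : List ℕ | memBR' a b k m l}
      = (((Wrd m).image (bp a b k) : Finset (List ℕ)) : Set (List ℕ)) := by
    ext l
    simp only [Set.mem_setOf_eq, Finset.coe_image, Set.mem_image, Finset.mem_coe, mem_Wrd]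
    constructor
    · intro hl
      obtain ⟨hs, hlen, hres, hcount, hlast, hchain⟩ := hl
      have hlnil : l ≠ [] := by
        intro h; subst h; simp at hlen; omega
      obtain ⟨w, hwlen, hbw⟩ := bp_surj ha hab hbk l hlnil hs hres hcount hlast hchain
      exact ⟨w, by omega, hbw⟩
    · rintro ⟨w, hwl, rfl⟩
      have hwne : w ≠ [] := by
        intro h; subst h; simp at hwl; omega
      have := bp_memBR' ha hab hbk hwne
      rwa [hwl] at this
  rw [hset, finsum_mem_coe_finset,
    Finset.sum_image (fun w _ w' _ h => bp_inj ha hab hbk w w' h)]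
  -- step 2 : rewrite the summand in terms of the word
  have hterm : ∀ w ∈ Wrd m,
      u ^ lcount k a (bp a b k w) * v ^ lcount k b (bp a b k w) * q ^ (bp a b k w).sum
      = u ^ (w.count true) * v ^ (w.count false)
          * q ^ (a * w.count true + b * w.count false + k * wtBR w) := by
    intro w _
    rw [lcount_bp_a ha hab hbk, lcount_bp_b ha hab hbk, bp_sum]
  rw [Finset.sum_congr rfl hterm]
  obtain ⟨n, rfl⟩ : ∃ n, m = n + 1 := ⟨m - 1, by omega⟩
  rw [sum_Wrd_concat]
  -- step 3 : split off the last letter and apply `main_sum`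
  set φ : ℕ → ℂ := fun h =>
    u ^ (h + 1) * v ^ (n - h) * q ^ (a * (h + 1) + b * (n - h))
      + u ^ h * v ^ (n + 1 - h) * q ^ (a * h + b * (n + 1 - h)) with hφ
  have hterm2 : ∀ s ∈ Wrd n,
      (u ^ ((s ++ [true]).count true) * v ^ ((s ++ [true]).count false)
          * q ^ (a * (s ++ [true]).count true + b * (s ++ [true]).count false + k * wtBR (s ++ [true]))
        + u ^ ((s ++ [false]).count true) * v ^ ((s ++ [false]).count false)
          * q ^ (a * (s ++ [false]).count true + b * (s ++ [false]).count false + k * wtBR (s ++ [false])))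
      = φ (s.count true) * (q ^ k) ^ wtBR' s := by
    intro s hs
    have hlen : s.length = n := mem_Wrd.mp hs
    have hcnt := count_tf s
    have hct : s.count true ≤ n := by omega
    have hcf : s.count false = n - s.count true := by omega
    have h1 : (s ++ [true]).count true = s.count true + 1 := by
      rw [List.count_append]; rfl
    have h2 : (s ++ [true]).count false = n - s.count true := by
      rw [List.count_append]; simp [hcf]
    have h3 : (s ++ [false]).count true = s.count true := by
      rw [List.count_append]; rfl
    have h4 : (s ++ [false]).count false = n + 1 - s.count true := by
      rw [List.count_append]
      have : List.count false [false] = 1 := rfl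
      omega
    rw [wtBR_concat, wtBR_concat, h1, h2, h3, h4, hφ]
    simp only
    rw [pow_add q (a * (s.count true + 1) + b * (n - s.count true)) (k * wtBR' s),
      pow_add q (a * s.count true + b * (n + 1 - s.count true)) (k * wtBR' s), pow_mul]
    ring
  rw [Finset.sum_congr rfl hterm2, main_sum (q ^ k) hx n φ]
  -- step 4 : the range identity
  conv_rhs => rw [Finset.sum_range_succ']
  have e1 : ∀ h, φ h * ((q ^ k) ^ Nat.choose (h + 1) 2 * gbinom (q ^ k) n h)
      = u ^ (h + 1) * v ^ (n - h) * q ^ (a * (h + 1) + b * (n - h) + k * Nat.choose (h + 1) 2)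
          * gbinom (q ^ k) n h
        + u ^ h * v ^ (n + 1 - h) * q ^ (a * h + b * (n + 1 - h) + k * Nat.choose (h + 1) 2)
          * gbinom (q ^ k) n h := by
    intro h
    rw [hφ]
    simp only
    rw [pow_add q (a * (h + 1) + b * (n - h)), pow_add q (a * h + b * (n + 1 - h)), pow_mul]
    ring
  rw [Finset.sum_congr rfl (fun h _ => e1 h), Finset.sum_add_distrib]
  set B : ℕ → ℂ := fun h =>
    u ^ h * v ^ (n + 1 - h) * q ^ (a * h + b * (n + 1 - h) + k * Nat.choose (h + 1) 2)
      * gbinom (q ^ k) n h with hB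
  have hBtop : B (n + 1) = 0 := by
    rw [hB]; simp [gbinom_eq_zero (Nat.lt_succ_self n)]
  have hsumB : ∑ h ∈ Finset.range (n + 1), B h
      = ∑ h ∈ Finset.range (n + 1), B (h + 1) + B 0 := by
    have h1 := Finset.sum_range_succ' B (n + 1)
    have h2 : ∑ h ∈ Finset.range (n + 1 + 1), B h = ∑ h ∈ Finset.range (n + 1), B h := by
      rw [Finset.sum_range_succ, hBtop, add_zero]
    rw [← h2, h1]
  rw [hsumB, ← add_assoc, ← Finset.sum_add_distrib]
  congr 1
  · apply Finset.sum_congr rfl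
    intro h _
    rw [hB]
    simp only
    have ee1 : n + 1 - (h + 1) = n - h := by omega
    have ee2 : Nat.choose (h + 1 + 1) 2 = Nat.choose (h + 1) 2 + (h + 1) := by
      rw [show h + 1 + 1 = h + 2 by omega]
      exact choose2_succ h
    rw [ee1, ee2]
    have ee3 : a * (h + 1) + b * (n - h) + k * (Nat.choose (h + 1) 2 + (h + 1))
        = ((n - h) * b + a * (h + 1) + k * Nat.choose (h + 1) 2) + k * (h + 1) := by ring
    rw [ee3, pow_add q ((n - h) * b + a * (h + 1) + k * Nat.choose (h + 1) 2) (k * (h + 1)),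
      pow_mul q k (h + 1)]
    have ee4 : a * (h + 1) + b * (n - h) + k * Nat.choose (h + 1) 2
        = (n - h) * b + a * (h + 1) + k * Nat.choose (h + 1) 2 := by ring
    rw [ee4, gbinom_pascal hx n h]
    ring
  · rw [hB]
    simp only
    rw [show a * 0 + b * (n + 1 - 0) + k * Nat.choose (0 + 1) 2
        = (n + 1 - 0) * b + a * 0 + k * Nat.choose 0 2 from by
      rw [show Nat.choose (0 + 1) 2 = 0 from rfl, show Nat.choose 0 2 = 0 from rfl]; ring]
    rw [gbinom_zero_right hx, gbinom_zero_right hx]
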